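/- Let V be a 4-dimensional complex vector space and let ω be a nonzero element of the degree-2 component of the exterior algebra ⋀V (i.e., ω lies in the square of the image of V in ⋀V). Then ω is decomposable — there exist u, v ∈ V with ω = u ∧ v — if and only if ω ∧ ω = 0. (This is the identification of the image of the Plücker embedding of the Grassmannian of 2-planes in ℂ⁴ with a quadric in ℙ⁵.) -/

import Mathlib

open ExteriorAlgebra

private lemma ea_swap {V : Type*} [AddCommGroup V] [Module ℂ V] (x y : V) :
    ι ℂ y * ι ℂ x = -(ι ℂ x * ι ℂ y) :=
  eq_neg_of_add_eq_zero_left (ι_add_mul_swap y x)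

private lemma ea_swap' {V : Type*} [AddCommGroup V] [Module ℂ V] (x y : V)
    (z : ExteriorAlgebra ℂ V) :
    ι ℂ y * (ι ℂ x * z) = -(ι ℂ x * (ι ℂ y * z)) := by
  rw [← mul_assoc, ea_swap, neg_mul, mul_assoc]

private lemma ea_sq' {V : Type*} [AddCommGroup V] [Module ℂ V] (x : V)
    (z : ExteriorAlgebra ℂ V) : ι ℂ x * (ι ℂ x * z) = 0 := by
  rw [← mul_assoc, ι_sq_zero, zero_mul]

private lemma aux_decomp {V : Type*} [AddCommGroup V] [Module ℂ V]
    (w x y z : V) (a b c d e f : ℂ) (ha : a ≠ 0)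
    (hpf : a * f - b * e + c * d = 0) :
    ∃ u v : V,
      a • (ι ℂ w * ι ℂ x) + b • (ι ℂ w * ι ℂ y) + c • (ι ℂ w * ι ℂ z)
        + d • (ι ℂ x * ι ℂ y) + e • (ι ℂ x * ι ℂ z) + f • (ι ℂ y * ι ℂ z)
        = ι ℂ u * ι ℂ v := by
  refine ⟨a • w - d • y - e • z, x + (b / a) • y + (c / a) • z, ?_⟩
  simp only [map_add, map_sub, map_smul, add_mul, sub_mul, mul_add, smul_mul_assoc,
    mul_smul_comm, smul_smul, ι_sq_zero, smul_zero, ea_swap x y, ea_swap x z, ea_swap y z,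
    ea_swap w x, ea_swap w y, ea_swap w z, smul_neg]
  match_scalars <;> field_simp
  linear_combination hpf

set_option maxHeartbeats 4000000 in
/-- In the exterior algebra of a 4-dimensional complex vector space, a
nonzero element `ω` of the degree-2 component is decomposable (`ω = u ∧ v`) if and only if
`ω ∧ ω = 0`. -/
theorem decomposable_iff_wedge_square_zero
    {V : Type*} [AddCommGroup V] [Module ℂ V] (hV : Module.finrank ℂ V = 4)
    (ω : ExteriorAlgebra ℂ V)
    (hω2 : ω ∈ (LinearMap.range (ExteriorAlgebra.ι ℂ : V →ₗ[ℂ] ExteriorAlgebra ℂ V)) ^ 2)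
    (hω : ω ≠ 0) :
    (∃ u v : V, ω = ExteriorAlgebra.ι ℂ u * ExteriorAlgebra.ι ℂ v) ↔ ω * ω = 0 := by
  constructor
  · rintro ⟨u, v, rfl⟩
    have h1 : ι ℂ v * (ι ℂ u * ι ℂ v) = 0 := by
      rw [ea_swap', ι_sq_zero, mul_zero, neg_zero]
    calc ι ℂ u * ι ℂ v * (ι ℂ u * ι ℂ v)
        = ι ℂ u * (ι ℂ v * (ι ℂ u * ι ℂ v)) := by rw [mul_assoc]
      _ = 0 := by rw [h1, mul_zero]
  · intro h0
    have : Module.Finite ℂ V := Module.finite_of_finrank_pos (by rw [hV]; norm_num)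
    obtain ⟨b⟩ : Nonempty (Module.Basis (Fin 4) ℂ V) := ⟨Module.finBasisOfFinrankEq ℂ V hV⟩
    -- ω is a combination of the six basic degree-2 monomials
    have hrange : LinearMap.range (ι ℂ : V →ₗ[ℂ] ExteriorAlgebra ℂ V)
        = Submodule.span ℂ (Set.range fun i : Fin 4 => ι ℂ (b i)) := by
      rw [LinearMap.range_eq_map, ← b.span_eq, Submodule.map_span, ← Set.range_comp]
      rfl
    have hmem : ω ∈ Submodule.span ℂ
        (Set.range fun p : Fin 4 × Fin 4 => ι ℂ (b p.1) * ι ℂ (b p.2)) := by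
      have h2 : (LinearMap.range (ι ℂ : V →ₗ[ℂ] ExteriorAlgebra ℂ V)) ^ 2 ≤
          Submodule.span ℂ (Set.range fun p : Fin 4 × Fin 4 => ι ℂ (b p.1) * ι ℂ (b p.2)) := by
        rw [pow_two, hrange, Submodule.span_mul_span]
        refine Submodule.span_le.2 ?_
        rintro t ht
        obtain ⟨u, ⟨i, rfl⟩, w, ⟨j, rfl⟩, rfl⟩ := ht
        exact Submodule.subset_span ⟨(i, j), rfl⟩
      exact h2 hω2
    obtain ⟨c, hc⟩ := (Submodule.mem_span_range_iff_exists_fun ℂ).mp hmem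
    obtain ⟨a01, a02, a03, a12, a13, a23, hrep⟩ :
        ∃ p q r s t u : ℂ, ω =
          p • (ι ℂ (b 0) * ι ℂ (b 1)) + q • (ι ℂ (b 0) * ι ℂ (b 2))
          + r • (ι ℂ (b 0) * ι ℂ (b 3)) + s • (ι ℂ (b 1) * ι ℂ (b 2))
          + t • (ι ℂ (b 1) * ι ℂ (b 3)) + u • (ι ℂ (b 2) * ι ℂ (b 3)) := by
      refine ⟨c (0,1) - c (1,0), c (0,2) - c (2,0), c (0,3) - c (3,0),
        c (1,2) - c (2,1), c (1,3) - c (3,1), c (2,3) - c (3,2), ?_⟩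
      rw [← hc, Fintype.sum_prod_type]
      simp only [Fin.sum_univ_four, ι_sq_zero, smul_zero,
        ea_swap (b 0) (b 1), ea_swap (b 0) (b 2), ea_swap (b 0) (b 3),
        ea_swap (b 1) (b 2), ea_swap (b 1) (b 3), ea_swap (b 2) (b 3), smul_neg,
        add_zero, zero_add]
      module
    -- the square of ω
    have hsq : ω * ω = (2 * (a01 * a23 - a02 * a13 + a03 * a12)) •
        (ι ℂ (b 0) * (ι ℂ (b 1) * (ι ℂ (b 2) * ι ℂ (b 3)))) := by
      rw [hrep]
      simp only [mul_add, add_mul, smul_mul_assoc, mul_smul_comm, smul_smul, mul_assoc,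
        ι_sq_zero, ea_sq', ea_swap (b 0) (b 1), ea_swap (b 0) (b 2), ea_swap (b 0) (b 3),
        ea_swap (b 1) (b 2), ea_swap (b 1) (b 3), ea_swap (b 2) (b 3),
        ea_swap' (b 0) (b 1), ea_swap' (b 0) (b 2), ea_swap' (b 0) (b 3),
        ea_swap' (b 1) (b 2), ea_swap' (b 1) (b 3), ea_swap' (b 2) (b 3),
        mul_neg, mul_zero, smul_zero, smul_neg, neg_neg, add_zero, zero_add, neg_zero]
      module
    -- the top monomial is nonzero
    have hM : ι ℂ (b 0) * (ι ℂ (b 1) * (ι ℂ (b 2) * ι ℂ (b 3))) ≠ 0 := by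
      intro hz
      have hιM : ExteriorAlgebra.ιMulti ℂ 4 (⇑b) =
          ι ℂ (b 0) * (ι ℂ (b 1) * (ι ℂ (b 2) * ι ℂ (b 3))) := by
        rw [ExteriorAlgebra.ιMulti_apply]
        simp [List.ofFn_succ, Fin.succ]
      let g : ∀ i, V [⋀^Fin i]→ₗ[ℂ] ℂ := fun i => match i with | 4 => b.det | _ => 0
      have h := ExteriorAlgebra.liftAlternating_apply_ιMulti (R := ℂ) g (⇑b)
      rw [hιM, hz, map_zero] at h
      have h4 : g 4 = b.det := rfl
      rw [h4, Module.Basis.det_self] at h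
      exact zero_ne_one h
    -- the Plücker relation
    have hPf : a01 * a23 - a02 * a13 + a03 * a12 = 0 := by
      by_contra hne
      apply hM
      have h2 : (2 * (a01 * a23 - a02 * a13 + a03 * a12)) ≠ 0 :=
        mul_ne_zero two_ne_zero hne
      rw [hsq] at h0
      rw [← one_smul ℂ (ι ℂ (b 0) * (ι ℂ (b 1) * (ι ℂ (b 2) * ι ℂ (b 3)))),
        ← inv_mul_cancel₀ h2, ← smul_smul, h0, smul_zero]
    -- case analysis on the leading coefficient
    by_cases h01 : a01 = 0
    · by_cases h02 : a02 = 0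
      · by_cases h03 : a03 = 0
        · by_cases h12 : a12 = 0
          · by_cases h13 : a13 = 0
            · exact ⟨a23 • b 2, b 3, by
                rw [hrep, h01, h02, h03, h12, h13]
                simp [smul_mul_assoc]⟩
            · obtain ⟨u, v, huv⟩ := aux_decomp (b 1) (b 3) (b 2) (b 0)
                a13 0 0 (-a23) 0 0 h13 (by ring)
              refine ⟨u, v, ?_⟩
              rw [hrep, h01, h02, h03, h12, ← huv]
              simp only [ea_swap (b 2) (b 3), ea_swap (b 0) (b 1), ea_swap (b 0) (b 3),
                ea_swap (b 0) (b 2), ea_swap (b 1) (b 2), ea_swap (b 1) (b 3), smul_neg]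
              module
          · obtain ⟨u, v, huv⟩ := aux_decomp (b 1) (b 2) (b 3) (b 0)
              a12 a13 0 a23 0 0 h12 (by ring)
            refine ⟨u, v, ?_⟩
            rw [hrep, h01, h02, h03, ← huv]
            simp only [ea_swap (b 0) (b 1), ea_swap (b 0) (b 2), ea_swap (b 0) (b 3),
              ea_swap (b 1) (b 2), ea_swap (b 1) (b 3), ea_swap (b 2) (b 3), smul_neg]
            module
        · obtain ⟨u, v, huv⟩ := aux_decomp (b 0) (b 3) (b 1) (b 2)
            a03 a01 a02 (-a13) (-a23) a12 h03 (by linear_combination hPf)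
          refine ⟨u, v, ?_⟩
          rw [hrep, ← huv]
          simp only [ea_swap (b 0) (b 1), ea_swap (b 0) (b 2), ea_swap (b 0) (b 3),
            ea_swap (b 1) (b 2), ea_swap (b 1) (b 3), ea_swap (b 2) (b 3), smul_neg]
          module
      · obtain ⟨u, v, huv⟩ := aux_decomp (b 0) (b 2) (b 1) (b 3)
          a02 a01 a03 (-a12) a23 a13 h02 (by linear_combination -hPf)
        refine ⟨u, v, ?_⟩
        rw [hrep, ← huv]
        simp only [ea_swap (b 0) (b 1), ea_swap (b 0) (b 2), ea_swap (b 0) (b 3),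
          ea_swap (b 1) (b 2), ea_swap (b 1) (b 3), ea_swap (b 2) (b 3), smul_neg]
        module
    · obtain ⟨u, v, huv⟩ := aux_decomp (b 0) (b 1) (b 2) (b 3)
        a01 a02 a03 a12 a13 a23 h01 (by linear_combination hPf)
      exact ⟨u, v, by rw [hrep, ← huv]⟩
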